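/- arXiv:math/9312212 — 3 statements merged into one kernel-verified Lean document; each statement's English description precedes it below -/
import Mathlib

section
/- If c is a 2-place function from (2^κ)^{++} to κ (where κ is an infinite cardinal), then there exist ordinals α₀ < α₁ < α₂ < α₃ < (2^κ)^{++} such that c(α₀,α₂) = c(α₀,α₃) = c(α₁,α₂) = c(α₁,α₃). -/
universe u

open Cardinal Ordinal

lemma my_pigeonhole {X Y : Type u} (h : #Y < #X) (f : X → Y) :
    ∃ a b, a ≠ b ∧ f a = f b := by
  have : ¬ Function.Injective f := fun hf => absurd (Cardinal.mk_le_of_injective hf) h.not_ge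
  rw [Function.not_injective_iff] at this
  obtain ⟨a, b, hfab, hab⟩ := this
  exact ⟨a, b, hab, hfab⟩

/-- If `c` is a 2-place function from `(2^κ)^{++}` to `κ` (κ an infinite
cardinal), then there are `α₀ < α₁ < α₂ < α₃ < (2^κ)^{++}` with
`c(α₀,α₂) = c(α₀,α₃) = c(α₁,α₂) = c(α₁,α₃)`. -/
theorem stmt0 (κ : Cardinal.{u}) (hκ : Cardinal.aleph0 ≤ κ)
    (c : Ordinal.{u} → Ordinal.{u} → (Cardinal.ord κ).ToType) :
    ∃ α₀ α₁ α₂ α₃ : Ordinal.{u},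
      α₀ < α₁ ∧ α₁ < α₂ ∧ α₂ < α₃ ∧
      α₃ < (Order.succ (Order.succ ((2 : Cardinal.{u}) ^ κ))).ord ∧
      c α₀ α₂ = c α₀ α₃ ∧ c α₀ α₂ = c α₁ α₂ ∧ c α₀ α₂ = c α₁ α₃ := by
  set μ : Cardinal.{u} := Order.succ ((2:Cardinal.{u}) ^ κ) with hμ
  set lam : Cardinal.{u} := Order.succ μ with hlam
  have h2κ : ℵ₀ ≤ (2:Cardinal.{u}) ^ κ := hκ.trans (Cardinal.cantor κ).le
  have hμinf : ℵ₀ ≤ μ := h2κ.trans (Order.le_succ _)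
  have hκμ : κ < μ := lt_of_lt_of_le (Cardinal.cantor κ) (Order.le_succ _)
  have hμlam : μ < lam := Order.lt_succ _
  have hlaminf : ℵ₀ ≤ lam := hμinf.trans hμlam.le
  -- embedding of toType into ordinals
  let eμ : μ.ord.ToType → Ordinal.{u} := fun x => ((Ordinal.ToType.mk (o := μ.ord)).symm x).1
  let el : lam.ord.ToType → Ordinal.{u} := fun x => ((Ordinal.ToType.mk (o := lam.ord)).symm x).1
  have heμ_lt : ∀ x, eμ x < μ.ord := fun x => ((Ordinal.ToType.mk (o := μ.ord)).symm x).2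
  have hel_lt : ∀ x, el x < lam.ord := fun x => ((Ordinal.ToType.mk (o := lam.ord)).symm x).2
  have heμ_mono : ∀ {x y}, x < y → eμ x < eμ y := by
    intro x y hxy
    exact (Ordinal.ToType.mk (o := μ.ord)).symm.lt_iff_lt.2 hxy
  have hel_mono : ∀ {x y}, x < y → el x < el y := by
    intro x y hxy
    exact (Ordinal.ToType.mk (o := lam.ord)).symm.lt_iff_lt.2 hxy
  -- the shift: β maps to μ.ord + el β, which lies in [μ.ord, lam.ord)
  have hshift : ∀ β : lam.ord.ToType, μ.ord + el β < lam.ord := by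
    intro β
    rw [Cardinal.lt_ord, Ordinal.card_add, Cardinal.card_ord]
    exact Cardinal.add_lt_of_lt hlaminf hμlam (Cardinal.lt_ord.mp (hel_lt β))
  -- step 1: for each β, two α's below μ.ord with same color
  have key : ∀ β : lam.ord.ToType,
      ∃ p : μ.ord.ToType × μ.ord.ToType × κ.ord.ToType,
        p.1 < p.2.1 ∧ c (eμ p.1) (μ.ord + el β) = p.2.2 ∧
          c (eμ p.2.1) (μ.ord + el β) = p.2.2 := by
    intro β
    have hcard : #(κ.ord.ToType) < #(μ.ord.ToType) := by
      rw [Cardinal.mk_toType, Cardinal.mk_toType, Cardinal.card_ord, Cardinal.card_ord]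
      exact hκμ
    obtain ⟨a, b, hab, hfab⟩ := my_pigeonhole hcard
      (fun a : μ.ord.ToType => c (eμ a) (μ.ord + el β))
    rcases hab.lt_or_gt with h | h
    · exact ⟨⟨a, b, c (eμ a) (μ.ord + el β)⟩, h, rfl, hfab.symm⟩
    · exact ⟨⟨b, a, c (eμ a) (μ.ord + el β)⟩, h, hfab.symm, rfl⟩
  choose g hg1 hg2 hg3 using key
  -- step 2: pigeonhole on g
  have hcard2 : #(μ.ord.ToType × μ.ord.ToType × κ.ord.ToType) < #(lam.ord.ToType) := by
    simp only [Cardinal.mk_prod, Cardinal.lift_id, Cardinal.mk_toType, Cardinal.card_ord]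
    calc μ * (μ * κ) = μ := by
          rw [Cardinal.mul_eq_max hμinf hκ, max_eq_left hκμ.le, Cardinal.mul_eq_self hμinf]
      _ < lam := hμlam
  obtain ⟨β, β', hββ', hgg⟩ := my_pigeonhole hcard2 g
  -- wlog β < β'
  wlog hlt : β < β' generalizing β β'
  · exact this β' β hββ'.symm hgg.symm ((hββ'.lt_or_gt).resolve_left hlt)
  refine ⟨eμ (g β).1, eμ (g β).2.1, μ.ord + el β, μ.ord + el β', ?_, ?_, ?_, ?_, ?_, ?_, ?_⟩
  · exact heμ_mono (hg1 β)
  · exact lt_of_lt_of_le (heμ_lt _) le_self_add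
  · exact add_lt_add_right (hel_mono hlt) _
  · exact hshift β'
  · -- c α₀ α₂ = c α₀ α₃
    rw [hg2 β, hgg, ← hg2 β']
  · rw [hg2 β, ← hg3 β]
  · rw [hg2 β, hgg, ← hg3 β']
end

section
/- Let B = B(L) be an interval Boolean algebra over a linear order L, and let a₀, a₁, a₂ ∈ B form a homogeneous triple. Then at least one of the following holds in B: a₀·a₁·(−a₂) = 0, or (−a₀)·(−a₁)·a₂ = 0, or a₁·a₂ = 0, or (−a₁)·(−a₂) = 0. -/
universe u

/-- `L⁺ = L ∪ {−∞, ∞}`: the order `L` with adjoined minimum `⊥ = −∞` and maximum `⊤ = ∞`. -/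
abbrev LPlus (L : Type u) := WithBot (WithTop L)

/-- The embedding of `L` into `L⁺`. -/
def toPlus {L : Type u} (x : L) : LPlus L := ((x : WithTop L) : WithBot (WithTop L))

/-- The half-open interval `[s, t) = {x ∈ L : s ≤ x < t}` with endpoints in `L⁺`. -/
def seg (L : Type u) [LinearOrder L] (s t : LPlus L) : Set L :=
  {x | s ≤ toPlus x ∧ toPlus x < t}

/-- The interval Boolean algebra `B(L)`: the subalgebra of `P(L)` generated by the
half-open intervals `[s, t)`, `s, t ∈ L⁺`; equivalently, the collection of finite
unions of such intervals. -/
def IntervalAlgebra (L : Type u) [LinearOrder L] : Set (Set L) :=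
  {a | ∃ (n : ℕ) (f : Fin n → LPlus L × LPlus L), a = ⋃ i, seg L (f i).1 (f i).2}

/-- Membership in `L* = {x ∈ L : ∃ y < x} ∪ {−∞, ∞}`, the admissible canonical
endpoints. -/
def InStar (L : Type u) [LinearOrder L] (x : LPlus L) : Prop :=
  x = ⊥ ∨ x = ⊤ ∨ ∃ y : L, toPlus y < x

/-- `⋃_{i<n} [l(2i), l(2i+1))`, the union of consecutive pairs of a list of endpoints. -/
def pairedUnion (L : Type u) [LinearOrder L] (l : List (LPlus L)) : Set L :=
  {x | ∃ (i : ℕ) (h1 : 2 * i < l.length) (h2 : 2 * i + 1 < l.length),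
    l[2 * i] ≤ toPlus x ∧ toPlus x < l[2 * i + 1]}

/-- `l` is the canonical representation of `a`: a strictly increasing even-length list
of endpoints in `L*` with `a = ⋃_{i<n} [l(2i), l(2i+1))`. -/
def CanonRep (L : Type u) [LinearOrder L] (a : Set L) (l : List (LPlus L)) : Prop :=
  Even l.length ∧ l.Chain' (· < ·) ∧ (∀ x ∈ l, InStar L x) ∧ a = pairedUnion L l

/-- `σ : Fin k → L⁺` is the increasing enumeration of `σ_a`: the endpoints of the
canonical representation `l` of `a` together with `−∞` and `∞`. -/
def IsSigmaEnum (L : Type u) [LinearOrder L] (a : Set L) (k : ℕ)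
    (σ : Fin k → LPlus L) (l : List (LPlus L)) : Prop :=
  CanonRep L a l ∧ StrictMono σ ∧
    Set.range σ = insert ⊥ (insert ⊤ {x | x ∈ l})

set_option linter.unusedSectionVars false

section Dev
variable {L : Type u} [LinearOrder L]

lemma toPlus_lt_top (x : L) : toPlus x < (⊤ : LPlus L) := by
  rw [← WithBot.coe_top, toPlus, WithBot.coe_lt_coe]
  exact WithTop.coe_lt_top x

lemma bot_lt_toPlus (x : L) : (⊥ : LPlus L) < toPlus x := WithBot.bot_lt_coe _

lemma LPlus.bot_ne_top' : (⊥ : LPlus L) ≠ (⊤ : LPlus L) := by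
  rw [← WithBot.coe_top]; exact WithBot.bot_ne_coe

lemma pairedUnion_cons_cons (s t : LPlus L) (l : List (LPlus L)) :
    pairedUnion L (s :: t :: l) = seg L s t ∪ pairedUnion L l := by
  ext x
  simp only [pairedUnion, seg, Set.mem_union, Set.mem_setOf_eq]
  constructor
  · rintro ⟨i, h1, h2, hx1, hx2⟩
    cases i with
    | zero => left; exact ⟨by simpa using hx1, by simpa using hx2⟩
    | succ i' =>
      right
      have e1 : 2 * (i' + 1) = 2 * i' + 1 + 1 := by ring
      have h1' : 2 * i' < l.length := by simp only [List.length_cons] at h1; omega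
      have h2' : 2 * i' + 1 < l.length := by simp only [List.length_cons] at h2; omega
      refine ⟨i', h1', h2', ?_, ?_⟩
      · have : (s :: t :: l)[2 * (i' + 1)]'h1 = l[2 * i']'h1' := by
          simp only [e1, List.getElem_cons_succ]
        rwa [this] at hx1
      · have : (s :: t :: l)[2 * (i' + 1) + 1]'h2 = l[2 * i' + 1]'h2' := by
          simp only [e1, List.getElem_cons_succ]
        rwa [this] at hx2
  · rintro (⟨hx1, hx2⟩ | ⟨i, h1, h2, hx1, hx2⟩)
    · exact ⟨0, by simp, by simp, by simpa using hx1, by simpa using hx2⟩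
    · have e1 : 2 * (i + 1) = 2 * i + 1 + 1 := by ring
      refine ⟨i + 1, by simp only [List.length_cons]; omega, by simp only [List.length_cons]; omega, ?_, ?_⟩
      · simpa only [e1, List.getElem_cons_succ] using hx1
      · simpa only [e1, List.getElem_cons_succ] using hx2

lemma mem_pairedUnion_iff_odd :
    ∀ (l : List (LPlus L)), l.Pairwise (· < ·) → Even l.length → ∀ x : L,
      (x ∈ pairedUnion L l ↔ Odd (l.countP (fun z => decide (z ≤ toPlus x))))
  | [] => by
    intro _ _ x
    simp [pairedUnion]
  | [a] => by
    intro _ he x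
    simp at he
  | (s :: t :: l) => by
    intro hp he x
    have hst : s < t := by
      rcases List.pairwise_cons.1 hp with ⟨h1, _⟩
      exact h1 t (by simp)
    have htl : ∀ z ∈ l, t < z := by
      rcases List.pairwise_cons.1 hp with ⟨_, h2⟩
      rcases List.pairwise_cons.1 h2 with ⟨h3, _⟩
      exact h3
    have hpl : l.Pairwise (· < ·) := by
      rcases List.pairwise_cons.1 hp with ⟨_, h2⟩
      exact (List.pairwise_cons.1 h2).2
    have hel : Even l.length := by
      rw [Nat.even_iff] at he ⊢
      simp only [List.length_cons] at he
      omega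
    have ih := mem_pairedUnion_iff_odd l hpl hel x
    rw [pairedUnion_cons_cons]
    by_cases hb : t ≤ toPlus x
    · have hs : s ≤ toPlus x := le_of_lt (lt_of_lt_of_le hst hb)
      have hseg : x ∉ seg L s t := fun h => absurd h.2 (not_lt.2 hb)
      rw [List.countP_cons_of_pos (p := fun z => decide (z ≤ toPlus x)) (a := s) (by simpa using hs),
          List.countP_cons_of_pos (p := fun z => decide (z ≤ toPlus x)) (a := t) (by simpa using hb)]
      simp only [Set.mem_union, hseg, false_or]
      rw [ih]
      constructor
      · rintro ⟨n, hn⟩; exact ⟨n + 1, by omega⟩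
      · rintro ⟨n, hn⟩; exact ⟨n - 1, by omega⟩
    · have hxt : toPlus x < t := not_le.1 hb
      have hcl : l.countP (fun z => decide (z ≤ toPlus x)) = 0 := by
        rw [List.countP_eq_zero]
        intro z hz
        simp only [decide_eq_true_eq]
        exact not_le.2 (lt_trans hxt (htl z hz))
      have hpu : x ∉ pairedUnion L l := by
        rw [ih, hcl]; simp
      have hct : (t :: l).countP (fun z => decide (z ≤ toPlus x)) = 0 := by
        rw [List.countP_cons_of_neg (p := fun z => decide (z ≤ toPlus x)) (a := t) (by simpa using hb), hcl]
      simp only [Set.mem_union, hpu, or_false]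
      by_cases ha : s ≤ toPlus x
      · rw [List.countP_cons_of_pos (p := fun z => decide (z ≤ toPlus x)) (a := s) (by simpa using ha), hct]
        simp [seg, ha, hxt]
      · rw [List.countP_cons_of_neg (p := fun z => decide (z ≤ toPlus x)) (a := s) (by simpa using ha), hct]
        simp [seg, ha]

end Dev

section Dev2
variable {L : Type u} [LinearOrder L] {a : Set L} {k : ℕ} {σ : Fin k → LPlus L}
  {l : List (LPlus L)}

lemma CanonRep.pairwise (h : CanonRep L a l) : l.Pairwise (· < ·) :=
  List.isChain_iff_pairwise.1 h.2.1

lemma CanonRep.nodup (h : CanonRep L a l) : l.Nodup :=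
  h.pairwise.imp ne_of_lt

lemma CanonRep.mem_iff_odd (h : CanonRep L a l) (x : L) :
    x ∈ a ↔ Odd (l.countP (fun z => decide (z ≤ toPlus x))) := by
  conv_lhs => rw [h.2.2.2]
  exact mem_pairedUnion_iff_odd l h.pairwise h.1 x

lemma CanonRep.mem_iff_bot (h : CanonRep L a l) (x : L)
    (hfin : ∀ z ∈ l, z ≠ ⊥ → z ≠ ⊤ → ¬ z ≤ toPlus x) :
    x ∈ a ↔ (⊥ : LPlus L) ∈ l := by
  classical
  rw [h.mem_iff_odd x]
  have hc : l.countP (fun z => decide (z ≤ toPlus x)) = l.count (⊥ : LPlus L) := by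
    rw [List.count]
    apply List.countP_congr
    intro z hz
    simp only [decide_eq_true_eq, beq_iff_eq]
    constructor
    · intro hle
      by_contra hne
      rcases eq_or_ne z ⊤ with rfl | hnt
      · exact absurd (lt_of_lt_of_le (toPlus_lt_top x) hle) (lt_irrefl _)
      · exact hfin z hz hne hnt hle
    · rintro rfl; exact bot_le
  rw [hc]
  by_cases hb : (⊥ : LPlus L) ∈ l
  · rw [List.count_eq_one_of_mem h.nodup hb]; simp [hb]
  · rw [List.count_eq_zero_of_not_mem hb]; simp [hb]

lemma CanonRep.mem_iff_top (h : CanonRep L a l) (x : L)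
    (hfin : ∀ z ∈ l, z ≠ ⊥ → z ≠ ⊤ → z ≤ toPlus x) :
    x ∈ a ↔ (⊤ : LPlus L) ∈ l := by
  classical
  rw [h.mem_iff_odd x]
  have hsplit := List.length_eq_countP_add_countP (fun z => decide (z ≤ toPlus x)) (l := l)
  have hneg : l.countP (fun z => decide ¬((fun z => decide (z ≤ toPlus x)) z = true))
      = l.count (⊤ : LPlus L) := by
    rw [List.count]
    apply List.countP_congr
    intro z hz
    simp only [decide_eq_true_eq, beq_iff_eq, decide_not, Bool.not_eq_true',
      decide_eq_false_iff_not]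
    constructor
    · intro hnle
      by_contra hnt
      rcases eq_or_ne z ⊥ with rfl | hnb
      · exact hnle bot_le
      · exact hnle (hfin z hz hnb hnt)
    · rintro rfl
      exact fun hle => absurd (lt_of_lt_of_le (toPlus_lt_top x) hle) (lt_irrefl _)
  rw [hneg] at hsplit
  have hev : Even l.length := h.1
  by_cases ht : (⊤ : LPlus L) ∈ l
  · rw [List.count_eq_one_of_mem h.nodup ht] at hsplit
    simp only [ht, iff_true]
    rw [Nat.odd_iff]
    rw [Nat.even_iff] at hev
    omega
  · rw [List.count_eq_zero_of_not_mem ht] at hsplit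
    simp only [ht, iff_false]
    rw [Nat.odd_iff]
    rw [Nat.even_iff] at hev
    omega

lemma IsSigmaEnum.k_pos (h : IsSigmaEnum L a k σ l) : 0 < k := by
  have hb : (⊥ : LPlus L) ∈ Set.range σ := by rw [h.2.2]; simp
  obtain ⟨u, -⟩ := hb
  exact u.pos

lemma IsSigmaEnum.sigma_zero (h : IsSigmaEnum L a k σ l) (hk : 0 < k) :
    σ ⟨0, hk⟩ = ⊥ := by
  have hb : (⊥ : LPlus L) ∈ Set.range σ := by rw [h.2.2]; simp
  obtain ⟨u, hu⟩ := hb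
  refine le_antisymm ?_ bot_le
  rw [← hu]
  exact h.2.1.monotone (by simp [Fin.le_def])

lemma IsSigmaEnum.sigma_last (h : IsSigmaEnum L a k σ l) (hk : 0 < k) :
    σ ⟨k - 1, by omega⟩ = ⊤ := by
  have hb : (⊤ : LPlus L) ∈ Set.range σ := by rw [h.2.2]; simp
  obtain ⟨u, hu⟩ := hb
  refine le_antisymm le_top ?_
  rw [← hu]
  exact h.2.1.monotone (by simp [Fin.le_def]; omega)

lemma IsSigmaEnum.sigma_mem_l (h : IsSigmaEnum L a k σ l) (u : Fin k)
    (h0 : 0 < u.val) (h1 : u.val < k - 1) : σ u ∈ l := by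
  have hm : σ u ∈ Set.range σ := Set.mem_range_self u
  rw [h.2.2] at hm
  simp only [Set.mem_insert_iff, Set.mem_setOf_eq] at hm
  rcases hm with hb | ht | hl
  · exfalso
    have : σ ⟨0, h.k_pos⟩ < σ u := h.2.1 (by simp [Fin.lt_def]; omega)
    rw [h.sigma_zero h.k_pos, hb] at this
    exact lt_irrefl _ this
  · exfalso
    have : σ u < σ ⟨k - 1, by omega⟩ := h.2.1 (by simp [Fin.lt_def]; omega)
    rw [h.sigma_last h.k_pos, ht] at this
    exact lt_irrefl _ this
  · exact hl

end Dev2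

section Dev3
variable {L : Type u} [LinearOrder L] {a : Set L} {k : ℕ} {σ : Fin k → LPlus L}
  {l : List (LPlus L)}

lemma IsSigmaEnum.mem_iff_gap (h : IsSigmaEnum L a k σ l) (t : ℕ) (ht : t + 1 < k) (x : L)
    (hx1 : σ ⟨t, Nat.lt_of_succ_lt ht⟩ ≤ toPlus x) (hx2 : toPlus x < σ ⟨t + 1, ht⟩) :
    x ∈ a ↔ Odd (t + (if (⊥ : LPlus L) ∈ l then 1 else 0)) := by
  classical
  rw [h.1.mem_iff_odd x]
  suffices hc : l.countP (fun z => decide (z ≤ toPlus x))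
      = t + (if (⊥ : LPlus L) ∈ l then 1 else 0) by rw [hc]
  have hmono := h.2.1.monotone
  have horder : ∀ u : Fin k, σ u ≤ toPlus x ↔ u.val ≤ t := by
    intro u
    constructor
    · intro hle
      by_contra hgt
      have h1 : σ ⟨t + 1, ht⟩ ≤ σ u := hmono (by simp [Fin.le_def]; omega)
      exact absurd (lt_of_lt_of_le hx2 (le_trans h1 hle)) (lt_irrefl _)
    · intro hle
      exact le_trans (hmono (by simp [Fin.le_def]; omega)) hx1
  -- countP as card of a Finset
  have hnd := h.1.nodup
  have hcount : l.countP (fun z => decide (z ≤ toPlus x))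
      = (l.toFinset.filter (fun z => z ≤ toPlus x)).card := by
    rw [List.countP_eq_length_filter, ← List.toFinset_card_of_nodup (hnd.filter _),
      List.toFinset_filter]
    simp only [decide_eq_true_eq]
  rw [hcount]
  have himage : l.toFinset.filter (fun z => z ≤ toPlus x)
      = (Finset.univ.filter
          (fun u : Fin k => u.val ≤ t ∧ (0 < u.val ∨ (⊥ : LPlus L) ∈ l))).image σ := by
    ext z
    simp only [Finset.mem_filter, Finset.mem_image, List.mem_toFinset, Finset.mem_univ,
      true_and]
    constructor
    · rintro ⟨hzl, hzle⟩
      have hz : z ∈ Set.range σ := by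
        rw [h.2.2]; simp only [Set.mem_insert_iff, Set.mem_setOf_eq]; tauto
      obtain ⟨u, rfl⟩ := hz
      refine ⟨u, ⟨(horder u).1 hzle, ?_⟩, rfl⟩
      rcases Nat.eq_zero_or_pos u.val with h0 | h0
      · right
        have : u = ⟨0, h.k_pos⟩ := by ext; exact h0
        rw [this, h.sigma_zero h.k_pos] at hzl
        exact hzl
      · left; exact h0
    · rintro ⟨u, ⟨hut, hu0⟩, rfl⟩
      constructor
      · rcases hu0 with h0 | hbl
        · exact h.sigma_mem_l u h0 (by omega)
        · rcases Nat.eq_zero_or_pos u.val with h0 | h0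
          · have : u = ⟨0, h.k_pos⟩ := by ext; exact h0
            rw [this, h.sigma_zero h.k_pos]
            exact hbl
          · exact h.sigma_mem_l u h0 (by omega)
      · exact (horder u).2 hut
  rw [himage, Finset.card_image_of_injective _ h.2.1.injective]
  by_cases hbl : (⊥ : LPlus L) ∈ l
  · have : (Finset.univ.filter
        (fun u : Fin k => u.val ≤ t ∧ (0 < u.val ∨ (⊥ : LPlus L) ∈ l)))
        = Finset.Iic (⟨t, by omega⟩ : Fin k) := by
      ext u
      simp [Fin.le_def, hbl]
    rw [this, Fin.card_Iic]
    simp [hbl]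
  · have : (Finset.univ.filter
        (fun u : Fin k => u.val ≤ t ∧ (0 < u.val ∨ (⊥ : LPlus L) ∈ l)))
        = Finset.Ioc (⟨0, h.k_pos⟩ : Fin k) (⟨t, by omega⟩ : Fin k) := by
      ext u
      simp [Fin.le_def, Fin.lt_def, hbl, and_comm]
    rw [this, Fin.card_Ioc]
    simp [hbl]

lemma IsSigmaEnum.even_sum (h : IsSigmaEnum L a k σ l) :
    Even (k + (if (⊥ : LPlus L) ∈ l then 1 else 0)
      + (if (⊤ : LPlus L) ∈ l then 1 else 0)) := by
  classical
  have hcard : (Finset.univ.image σ).card = k := by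
    rw [Finset.card_image_of_injective _ h.2.1.injective, Finset.card_univ,
      Fintype.card_fin]
  have hset : (Finset.univ.image σ) = insert ⊥ (insert ⊤ l.toFinset) := by
    apply Finset.coe_injective
    rw [Finset.coe_image, Finset.coe_univ, Set.image_univ, h.2.2]
    simp
  rw [hset] at hcard
  have hne : (⊥ : LPlus L) ∉ ({(⊤ : LPlus L)} : Set (LPlus L)) := by
    simp [LPlus.bot_ne_top' (L := L)]
  have hbot_mem : (⊥ : LPlus L) ∈ insert (⊤ : LPlus L) l.toFinset ↔ (⊥ : LPlus L) ∈ l := by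
    simp [LPlus.bot_ne_top' (L := L)]
  have hlen : l.toFinset.card = l.length := List.toFinset_card_of_nodup h.1.nodup
  have hev : Even l.length := h.1.1
  rw [Nat.even_iff] at hev ⊢
  by_cases hb : (⊥ : LPlus L) ∈ l <;> by_cases htp : (⊤ : LPlus L) ∈ l
  all_goals {
    simp only [hb, htp, if_true, if_false]
    first
    | (rw [Finset.card_insert_of_mem (hbot_mem.2 hb),
          Finset.card_insert_of_mem (List.mem_toFinset.2 htp), hlen] at hcard; omega)
    | (rw [Finset.card_insert_of_mem (hbot_mem.2 hb),
          Finset.card_insert_of_notMem (fun hc => htp (List.mem_toFinset.1 hc)), hlen] at hcard; omega)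
    | (rw [Finset.card_insert_of_notMem (fun hc => hb (hbot_mem.1 hc)),
          Finset.card_insert_of_mem (List.mem_toFinset.2 htp), hlen] at hcard; omega)
    | (rw [Finset.card_insert_of_notMem (fun hc => hb (hbot_mem.1 hc)),
          Finset.card_insert_of_notMem (fun hc => htp (List.mem_toFinset.1 hc)), hlen] at hcard; omega)
  }

end Dev3


/-- If `a₀, a₁, a₂` form a homogeneous triple in an interval Boolean
algebra `B(L)`, then `a₀·a₁·(−a₂) = 0`, or `(−a₀)·(−a₁)·a₂ = 0`, or `a₁·a₂ = 0`, or
`(−a₁)·(−a₂) = 0`. -/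
theorem stmt6 (L : Type u) [LinearOrder L] (a : Fin 3 → Set L)
    (ha : ∀ i, a i ∈ IntervalAlgebra L)
    (k : ℕ) (σ : Fin 3 → Fin k → LPlus L) (l : Fin 3 → List (LPlus L))
    -- `σ i` enumerates the endpoint set `σ_{a i}` of the canonical representation `l i`
    (henum : ∀ i, IsSigmaEnum L (a i) k (σ i) (l i))
    -- homogeneity (2): which of ±∞ are genuine endpoints is the same for all i
    (hends : ∀ i j : Fin 3, ((⊥ : LPlus L) ∈ l i ↔ (⊥ : LPlus L) ∈ l j) ∧
      ((⊤ : LPlus L) ∈ l i ↔ (⊤ : LPlus L) ∈ l j))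
    -- homogeneity (3): for i < j all finite endpoints of `a j` lie strictly between
    -- two consecutive endpoints of `a i`
    (hhom : ∀ i j : Fin 3, i < j → ∃ (ℓ : ℕ) (h : ℓ + 1 < k),
      ∀ s ∈ l j, s ≠ ⊥ → s ≠ ⊤ →
        σ i ⟨ℓ, by omega⟩ < s ∧ s < σ i ⟨ℓ + 1, h⟩) :
    a 0 ∩ a 1 ∩ (a 2)ᶜ = ∅ ∨ (a 0)ᶜ ∩ (a 1)ᶜ ∩ a 2 = ∅ ∨
    a 1 ∩ a 2 = ∅ ∨ (a 1)ᶜ ∩ (a 2)ᶜ = ∅ := by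
  classical
  by_contra hcon
  push_neg at hcon
  obtain ⟨hc1, hc2, hc3, hc4⟩ := hcon
  obtain ⟨x₁, hx₁⟩ := hc1
  obtain ⟨x₂, hx₂⟩ := hc2
  obtain ⟨x₃, hx₃⟩ := hc3
  obtain ⟨x₄, hx₄⟩ := hc4
  simp only [Set.mem_inter_iff, Set.mem_compl_iff] at hx₁ hx₂ hx₃ hx₄
  obtain ⟨⟨hx₁0, hx₁1⟩, hx₁2⟩ := hx₁
  obtain ⟨⟨hx₂0, hx₂1⟩, hx₂2⟩ := hx₂
  obtain ⟨hx₃1, hx₃2⟩ := hx₃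
  obtain ⟨hx₄1, hx₄2⟩ := hx₄
  obtain ⟨p, hp, hP⟩ := hhom 0 1 (by decide)
  obtain ⟨r, hr, hR⟩ := hhom 1 2 (by decide)
  have h0e := henum 0
  have h1e := henum 1
  have h2e := henum 2
  have hbot12 := (hends 1 2).1
  have htop12 := (hends 1 2).2
  have hkpos : 0 < k := h1e.k_pos
  -- helper facts
  have hA2bot : ∀ x : L, toPlus x ≤ σ 1 ⟨r, by omega⟩ →
      (x ∈ a 2 ↔ (⊥ : LPlus L) ∈ l 2) := by
    intro x hx
    refine h2e.1.mem_iff_bot x ?_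
    intro z hz hzb hzt hle
    exact absurd (lt_of_lt_of_le (hR z hz hzb hzt).1 (le_trans hle hx)) (lt_irrefl _)
  have hA2top : ∀ x : L, σ 1 ⟨r + 1, hr⟩ ≤ toPlus x →
      (x ∈ a 2 ↔ (⊤ : LPlus L) ∈ l 2) := by
    intro x hx
    refine h2e.1.mem_iff_top x ?_
    intro z hz hzb hzt
    exact le_trans (le_of_lt (hR z hz hzb hzt).2) hx
  have hA1bot : ∀ x : L, toPlus x ≤ σ 0 ⟨p, by omega⟩ →
      (x ∈ a 1 ↔ (⊥ : LPlus L) ∈ l 1) := by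
    intro x hx
    refine h1e.1.mem_iff_bot x ?_
    intro z hz hzb hzt hle
    exact absurd (lt_of_lt_of_le (hP z hz hzb hzt).1 (le_trans hle hx)) (lt_irrefl _)
  have hA1top : ∀ x : L, σ 0 ⟨p + 1, hp⟩ ≤ toPlus x →
      (x ∈ a 1 ↔ (⊤ : LPlus L) ∈ l 1) := by
    intro x hx
    refine h1e.1.mem_iff_top x ?_
    intro z hz hzb hzt
    exact le_trans (le_of_lt (hP z hz hzb hzt).2) hx
  have hA0gap : ∀ x : L, σ 0 ⟨p, by omega⟩ ≤ toPlus x → toPlus x < σ 0 ⟨p + 1, hp⟩ →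
      (x ∈ a 0 ↔ Odd (p + (if (⊥ : LPlus L) ∈ l 0 then 1 else 0))) := by
    intro x hx1 hx2
    exact h0e.mem_iff_gap p hp x hx1 hx2
  rcases eq_or_ne r 0 with rfl | hr0
  · -- CASE r = 0
    have key : ∀ x : L, (x ∈ a 1 ↔ (⊥ : LPlus L) ∈ l 1) ∨
        (x ∈ a 2 ↔ (⊤ : LPlus L) ∈ l 2) := by
      intro x
      rcases lt_or_ge (toPlus x) (σ 1 ⟨0 + 1, hr⟩) with hlt | hge
      · left
        have hz : σ 1 ⟨0, by omega⟩ ≤ toPlus x :=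
          (h1e.sigma_zero hkpos).trans_le bot_le
        have hodd := h1e.mem_iff_gap 0 hr x hz hlt
        rw [hodd]
        by_cases hb : (⊥ : LPlus L) ∈ l 1 <;> simp [hb, Nat.odd_iff]
      · right; exact hA2top x hge
    by_cases hE : (⊥ : LPlus L) ∈ l 1
    · have hF : ¬(⊤ : LPlus L) ∈ l 2 := by
        rcases key x₄ with hk | hk
        · exact absurd (hk.2 hE) hx₄1
        · exact fun h => hx₄2 (hk.2 h)
      rcases key x₂ with hk | hk
      · exact hx₂1 (hk.2 hE)
      · exact hF (hk.1 hx₂2)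
    · have hF : (⊤ : LPlus L) ∈ l 2 := by
        rcases key x₃ with hk | hk
        · exact absurd (hk.1 hx₃1) hE
        · exact hk.1 hx₃2
      rcases key x₁ with hk | hk
      · exact hE (hk.1 hx₁1)
      · exact hx₁2 (hk.2 hF)
  rcases eq_or_ne (r + 1) (k - 1) with hrk | hrk
  · -- CASE r = k - 2
    have key : ∀ x : L, (x ∈ a 2 ↔ (⊥ : LPlus L) ∈ l 2) ∨
        (x ∈ a 1 ↔ (⊤ : LPlus L) ∈ l 1) := by
      intro x
      rcases le_or_gt (toPlus x) (σ 1 ⟨r, by omega⟩) with hle | hgt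
      · left; exact hA2bot x hle
      · right
        have htopeq : σ 1 ⟨r + 1, hr⟩ = ⊤ := by
          have hlast := h1e.sigma_last hkpos
          have : (⟨r + 1, hr⟩ : Fin k) = ⟨k - 1, by omega⟩ := by
            ext; simp [hrk]
          rw [this]
          exact hlast
        have hlt : toPlus x < σ 1 ⟨r + 1, hr⟩ := by
          rw [htopeq]; exact toPlus_lt_top x
        have hodd := h1e.mem_iff_gap r hr x (le_of_lt hgt) hlt
        rw [hodd]
        have hev := h1e.even_sum
        rw [Nat.even_iff] at hev
        by_cases hb : (⊥ : LPlus L) ∈ l 1 <;> by_cases htp : (⊤ : LPlus L) ∈ l 1 <;>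
          simp only [hb, htp, if_true, if_false, iff_true, iff_false] at hev ⊢ <;>
          rw [Nat.odd_iff] <;> omega
    by_cases hF : (⊤ : LPlus L) ∈ l 1
    · have hEb : (⊥ : LPlus L) ∈ l 2 := by
        rcases key x₂ with hk | hk
        · exact hk.1 hx₂2
        · exact absurd (hk.2 hF) hx₂1
      rcases key x₄ with hk | hk
      · exact hx₄2 (hk.2 hEb)
      · exact hx₄1 (hk.2 hF)
    · have hEnb : ¬(⊥ : LPlus L) ∈ l 2 := by
        rcases key x₁ with hk | hk
        · exact fun hb => hx₁2 (hk.2 hb)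
        · exact absurd (hk.1 hx₁1) hF
      rcases key x₃ with hk | hk
      · exact hEnb (hk.1 hx₃2)
      · exact hF (hk.1 hx₃1)
  · -- CASE 0 < r, r + 1 < k - 1
    have hrpos : 0 < r := Nat.pos_of_ne_zero hr0
    have hrk1 : r + 1 < k - 1 := by omega
    have hmem_r : σ 1 ⟨r, by omega⟩ ∈ l 1 :=
      h1e.sigma_mem_l ⟨r, by omega⟩ (by simpa using hrpos) (by simp; omega)
    have hmem_r1 : σ 1 ⟨r + 1, hr⟩ ∈ l 1 :=
      h1e.sigma_mem_l ⟨r + 1, hr⟩ (by simp) (by simpa using hrk1)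
    have hne_rb : σ 1 ⟨r, by omega⟩ ≠ ⊥ := by
      have hlt : σ 1 ⟨0, hkpos⟩ < σ 1 ⟨r, by omega⟩ :=
        h1e.2.1 (by simp [Fin.lt_def]; omega)
      rw [h1e.sigma_zero hkpos] at hlt
      exact (ne_of_lt hlt).symm
    have hne_rt : σ 1 ⟨r, by omega⟩ ≠ ⊤ := by
      have hlt : σ 1 ⟨r, by omega⟩ < σ 1 ⟨k - 1, by omega⟩ :=
        h1e.2.1 (by simp [Fin.lt_def]; omega)
      rw [h1e.sigma_last hkpos] at hlt
      exact ne_of_lt hlt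
    have hne_r1b : σ 1 ⟨r + 1, hr⟩ ≠ ⊥ := by
      have hlt : σ 1 ⟨0, hkpos⟩ < σ 1 ⟨r + 1, hr⟩ :=
        h1e.2.1 (by simp [Fin.lt_def])
      rw [h1e.sigma_zero hkpos] at hlt
      exact (ne_of_lt hlt).symm
    have hne_r1t : σ 1 ⟨r + 1, hr⟩ ≠ ⊤ := by
      have hlt : σ 1 ⟨r + 1, hr⟩ < σ 1 ⟨k - 1, by omega⟩ :=
        h1e.2.1 (by simp [Fin.lt_def]; omega)
      rw [h1e.sigma_last hkpos] at hlt
      exact ne_of_lt hlt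
    have hgap1 := hP _ hmem_r hne_rb hne_rt
    have hgap2 := hP _ hmem_r1 hne_r1b hne_r1t
    have key : ∀ x : L,
        ((x ∈ a 1 ↔ (⊥ : LPlus L) ∈ l 1) ∧ (x ∈ a 2 ↔ (⊥ : LPlus L) ∈ l 2)) ∨
        (x ∈ a 0 ↔ Odd (p + (if (⊥ : LPlus L) ∈ l 0 then 1 else 0))) ∨
        ((x ∈ a 1 ↔ (⊤ : LPlus L) ∈ l 1) ∧ (x ∈ a 2 ↔ (⊤ : LPlus L) ∈ l 2)) := by
      intro x
      rcases le_or_gt (toPlus x) (σ 1 ⟨r, by omega⟩) with hle | hgt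
      · rcases le_or_gt (toPlus x) (σ 0 ⟨p, by omega⟩) with hle0 | hgt0
        · exact Or.inl ⟨hA1bot x hle0, hA2bot x hle⟩
        · exact Or.inr (Or.inl (hA0gap x (le_of_lt hgt0)
            (lt_of_le_of_lt hle hgap1.2)))
      rcases lt_or_ge (toPlus x) (σ 1 ⟨r + 1, hr⟩) with hlt | hge
      · exact Or.inr (Or.inl (hA0gap x (le_of_lt (lt_trans hgap1.1 hgt))
          (lt_trans hlt hgap2.2)))
      · rcases le_or_gt (σ 0 ⟨p + 1, hp⟩) (toPlus x) with hge0 | hlt0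
        · exact Or.inr (Or.inr ⟨hA1top x hge0, hA2top x hge⟩)
        · exact Or.inr (Or.inl (hA0gap x (le_of_lt (lt_trans hgap1.1 hgt)) hlt0))
    have hD : Odd (p + (if (⊥ : LPlus L) ∈ l 0 then 1 else 0)) := by
      rcases key x₁ with ⟨hk1, hk2⟩ | hk | ⟨hk1, hk2⟩
      · exact absurd (hk2.2 (hbot12.1 (hk1.1 hx₁1))) hx₁2
      · exact hk.1 hx₁0
      · exact absurd (hk2.2 (htop12.1 (hk1.1 hx₁1))) hx₁2
    rcases key x₂ with ⟨hk1, hk2⟩ | hk | ⟨hk1, hk2⟩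
    · exact hx₂1 (hk1.2 (hbot12.2 (hk2.1 hx₂2)))
    · exact hx₂0 (hk.2 hD)
    · exact hx₂1 (hk1.2 (htop12.2 (hk2.1 hx₂2)))
end

section
/- Let κ be an infinite cardinal and for each ζ < κ let B_ζ be an interval Boolean algebra. If a_α ∈ ∏_{ζ<κ} B_ζ for α < (2^κ)^{++}, then there exist α₀ < α₁ < α₂ < α₃ < (2^κ)^{++} such that (a_{α₀} △ a_{α₁}) · (a_{α₂} △ a_{α₃}) = 0. -/
universe u

section Aux
universe v
variable {L : Type v} [LinearOrder L]

def sel (p : LPlus L × LPlus L) (k : Bool) : LPlus L := bif k then p.1 else p.2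

def memF (F : ℕ → LPlus L × LPlus L) (x : L) : Prop :=
  ∃ i, (F i).1 ≤ toPlus x ∧ toPlus x < (F i).2

lemma exists_memF_rep {a : Set L} (h : a ∈ IntervalAlgebra L) :
    ∃ F : ℕ → LPlus L × LPlus L, ∀ x, x ∈ a ↔ memF F x := by
  obtain ⟨n, f, rfl⟩ := h
  refine ⟨fun i => if h : i < n then f ⟨i, h⟩ else (⊥, ⊥), fun x => ?_⟩
  constructor
  · intro hx
    obtain ⟨i, hi⟩ := Set.mem_iUnion.mp hx
    exact ⟨i.1, by simpa [seg, i.isLt] using hi⟩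
  · rintro ⟨i, h1, h2⟩
    dsimp only at h1 h2
    by_cases hi : i < n
    · rw [dif_pos hi] at h1 h2
      exact Set.mem_iUnion.mpr ⟨⟨i, hi⟩, h1, h2⟩
    · rw [dif_neg hi] at h2
      exact absurd h2 not_lt_bot

lemma core (A B : Bool → ℕ → LPlus L × LPlus L)
    (hsync : ∀ (s s' t t' : Bool) (m n : ℕ) (k l : Bool),
      (sel (A s m) k < sel (B t n) l ↔ sel (A s' m) k < sel (B t' n) l) ∧
      (sel (B t n) l < sel (A s m) k ↔ sel (B t' n) l < sel (A s' m) k))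
    (x : L) (h0 : memF (A false) x) (h1 : ¬ memF (A true) x)
    (h2 : memF (B false) x) (h3 : ¬ memF (B true) x) : False := by
  obtain ⟨i, hp, hq⟩ := h0
  obtain ⟨j, hu, hv⟩ := h2
  have hni : ¬ ((A true i).1 ≤ toPlus x ∧ toPlus x < (A true i).2) := fun hc => h1 ⟨i, hc⟩
  have hnj : ¬ ((B true j).1 ≤ toPlus x ∧ toPlus x < (B true j).2) := fun hc => h3 ⟨j, hc⟩
  rcases not_and_or.mp hni with hp' | hq'
  · rcases not_and_or.mp hnj with hu' | hv'
    · -- x < p', x < u'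
      have h₁ : (B false j).1 < (A true i).1 := lt_of_le_of_lt hu (not_le.mp hp')
      have h₂ : (B true j).1 < (A false i).1 :=
        ((hsync true false false true i j true true).2).mp h₁
      exact hu' (le_of_lt (lt_of_lt_of_le h₂ hp))
    · -- x < p', v' ≤ x
      have h₁ : (B true j).2 < (A true i).1 := lt_of_le_of_lt (not_lt.mp hv') (not_le.mp hp')
      have h₂ : (B false j).2 < (A false i).1 :=
        ((hsync true false true false i j true false).2).mp h₁
      exact lt_irrefl _ (hv.trans (lt_of_lt_of_le h₂ hp))
  · rcases not_and_or.mp hnj with hu' | hv'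
    · -- q' ≤ x, x < u'
      have h₁ : (A true i).2 < (B true j).1 := lt_of_le_of_lt (not_lt.mp hq') (not_le.mp hu')
      have h₂ : (A false i).2 < (B false j).1 :=
        ((hsync true false true false i j false true).1).mp h₁
      exact lt_irrefl _ (hq.trans (lt_of_lt_of_le h₂ hu))
    · -- q' ≤ x, v' ≤ x
      have h₁ : (A true i).2 < (B false j).2 := lt_of_le_of_lt (not_lt.mp hq') hv
      have h₂ : (A false i).2 < (B true j).2 :=
        ((hsync true false false true i j false false).1).mp h₁
      exact lt_irrefl _ (hq.trans (lt_of_lt_of_le h₂ (not_lt.mp hv')))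

end Aux

def colorOf {T : Type v} {J : T → Type v} [∀ t, LinearOrder (J t)]
    (F G : ∀ ζ, ℕ → LPlus (J ζ) × LPlus (J ζ)) :
    Set (T × ULift.{v} (ℕ × ℕ × Bool × Bool × Bool)) :=
  {q | if q.2.down.2.2.2.2 then
        sel (F q.1 q.2.down.1) q.2.down.2.2.1 < sel (G q.1 q.2.down.2.1) q.2.down.2.2.2.1
      else
        sel (G q.1 q.2.down.2.1) q.2.down.2.2.2.1 < sel (F q.1 q.2.down.1) q.2.down.2.2.1}

lemma colorOf_eq_iff {T : Type v} {J : T → Type v} [∀ t, LinearOrder (J t)]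
    {F G F' G' : ∀ ζ, ℕ → LPlus (J ζ) × LPlus (J ζ)}
    (h : colorOf F G = colorOf F' G') (ζ : T) (m n : ℕ) (k l : Bool) :
    (sel (F ζ m) k < sel (G ζ n) l ↔ sel (F' ζ m) k < sel (G' ζ n) l) ∧
    (sel (G ζ n) l < sel (F ζ m) k ↔ sel (G' ζ n) l < sel (F' ζ m) k) := by
  constructor
  · have := Set.ext_iff.mp h (ζ, ⟨(m, n, k, l, true)⟩)
    simpa [colorOf] using this
  · have := Set.ext_iff.mp h (ζ, ⟨(m, n, k, l, false)⟩)
    simpa [colorOf] using this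

open Cardinal Order in
lemma rect {C : Type (v+1)} (lam : Cardinal.{v}) (hlam : Cardinal.aleph0 ≤ lam)
    (hC : #C ≤ Cardinal.lift.{v+1} lam)
    (c : Ordinal.{v} → Ordinal.{v} → C) :
    ∃ α₀ α₁ α₂ α₃ : Ordinal.{v}, α₀ < α₁ ∧ α₁ < α₂ ∧ α₂ < α₃ ∧
      α₃ < (Order.succ (Order.succ lam)).ord ∧
      c α₀ α₂ = c α₀ α₃ ∧ c α₁ α₂ = c α₁ α₃ ∧ c α₀ α₂ = c α₁ α₂ := by
  set ν := (Order.succ lam).ord with hν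
  set μ := (Order.succ (Order.succ lam)).ord with hμ
  have hlift : (aleph0 : Cardinal.{v+1}) ≤ lift.{v+1} (Order.succ lam) := by
    rw [← Cardinal.lift_aleph0.{v+1, v}]
    exact Cardinal.lift_le.mpr (hlam.trans (Order.le_succ _))
  have stepA : ∀ β : Ordinal.{v}, ∃ p : ↥(Set.Iio ν) × ↥(Set.Iio ν),
      (p.1 : Ordinal) < (p.2 : Ordinal) ∧ c p.1 β = c p.2 β := by
    intro β
    have hninj : ¬ Function.Injective (fun α : ↥(Set.Iio ν) => c α.1 β) := by
      intro hinj
      have h1 := Cardinal.mk_le_of_injective hinj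
      rw [Ordinal.mk_Iio_ordinal, Cardinal.card_ord] at h1
      have h2 := Cardinal.lift_le.mp (h1.trans hC)
      exact absurd h2 (not_le.mpr (Order.lt_succ _))
    obtain ⟨x, y, hxy, hne⟩ := Function.not_injective_iff.mp hninj
    rcases lt_or_gt_of_ne (fun hv : (x : Ordinal) = (y : Ordinal) => hne (Subtype.ext hv)) with h | h
    · exact ⟨(x, y), h, hxy⟩
    · exact ⟨(y, x), h, hxy.symm⟩
  choose P hP1 hP2 using stepA
  set S := {β : Ordinal.{v} // ν ≤ β ∧ β < μ} with hS
  have hSbig : ¬ #S ≤ lift.{v+1} (Order.succ lam) := by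
    intro hle
    have φinj : Function.Injective (fun β : ↥(Set.Iio μ) =>
        if h : (β : Ordinal) < ν then (Sum.inl ⟨β.1, h⟩ : ↥(Set.Iio ν) ⊕ S)
        else Sum.inr ⟨β.1, not_lt.mp h, β.2⟩) := by
      intro x y hxy
      by_cases hx : (x : Ordinal) < ν <;> by_cases hy : (y : Ordinal) < ν <;>
        simp only [hx, hy, reduceDIte, Sum.inl.injEq, Sum.inr.injEq, Subtype.mk.injEq] at hxy <;>
        first
        | exact Subtype.ext hxy
        | (apply Subtype.ext; have h2 := congrArg Subtype.val hxy; exact h2)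
        | simp at hxy
    have h1 := Cardinal.mk_le_of_injective φinj
    rw [Cardinal.mk_sum, Cardinal.lift_id, Cardinal.lift_id, Ordinal.mk_Iio_ordinal,
      Ordinal.mk_Iio_ordinal, Cardinal.card_ord, Cardinal.card_ord] at h1
    have h2 : lift.{v+1} (succ (succ lam)) ≤ lift.{v+1} (succ lam) := by
      calc lift.{v+1} (succ (succ lam)) ≤ lift.{v+1} (succ lam) + #S := h1
        _ ≤ lift.{v+1} (succ lam) + lift.{v+1} (succ lam) := add_le_add_right hle _
        _ = lift.{v+1} (succ lam) := Cardinal.add_eq_self hlift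
    exact absurd (Cardinal.lift_le.mp h2) (not_le.mpr (Order.lt_succ _))
  have hD : #(C × ↥(Set.Iio ν) × ↥(Set.Iio ν)) ≤ lift.{v+1} (succ lam) := by
    have hIio : #(↥(Set.Iio ν)) = lift.{v+1} (succ lam) := by
      rw [Ordinal.mk_Iio_ordinal, Cardinal.card_ord]
    have hCle : #C ≤ lift.{v+1} (succ lam) := hC.trans (Cardinal.lift_le.mpr (Order.le_succ _))
    calc #(C × ↥(Set.Iio ν) × ↥(Set.Iio ν))
        = #C * (#(↥(Set.Iio ν)) * #(↥(Set.Iio ν))) := by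
          simp only [Cardinal.mk_prod, Cardinal.lift_id]
      _ ≤ lift.{v+1} (succ lam) * (lift.{v+1} (succ lam) * lift.{v+1} (succ lam)) := by
          exact mul_le_mul' hCle (mul_le_mul' (le_of_eq hIio) (le_of_eq hIio))
      _ = lift.{v+1} (succ lam) := by
          rw [Cardinal.mul_eq_self hlift, Cardinal.mul_eq_self hlift]
  have hninj : ¬ Function.Injective
      (fun β : S => ((c ((P β.1).1 : Ordinal) β.1, P β.1) : C × ↥(Set.Iio ν) × ↥(Set.Iio ν))) := by
    intro hinj
    exact hSbig ((Cardinal.mk_le_of_injective hinj).trans hD)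
  obtain ⟨β₂, β₃, heq, hne⟩ := Function.not_injective_iff.mp hninj
  have hPeq : P β₂.1 = P β₃.1 := congrArg Prod.snd heq
  have hceq : c ((P β₂.1).1 : Ordinal) β₂.1 = c ((P β₃.1).1 : Ordinal) β₃.1 :=
    congrArg Prod.fst heq
  have hβne : β₂.1 ≠ β₃.1 := fun hv => hne (Subtype.ext hv)
  obtain ⟨γ₂, γ₃, hγ, hPeq', hceq'⟩ : ∃ γ₂ γ₃ : S, γ₂.1 < γ₃.1 ∧ P γ₂.1 = P γ₃.1 ∧
      c ((P γ₂.1).1 : Ordinal) γ₂.1 = c ((P γ₃.1).1 : Ordinal) γ₃.1 := by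
    rcases lt_or_gt_of_ne hβne with hlt | hlt
    · exact ⟨β₂, β₃, hlt, hPeq, hceq⟩
    · exact ⟨β₃, β₂, hlt, hPeq.symm, hceq.symm⟩
  refine ⟨((P γ₂.1).1 : Ordinal), ((P γ₂.1).2 : Ordinal), γ₂.1, γ₃.1,
    hP1 γ₂.1, lt_of_lt_of_le (P γ₂.1).2.2 γ₂.2.1, hγ, γ₃.2.2, ?_, ?_, hP2 γ₂.1⟩
  · conv_rhs => rw [hPeq']
    exact hceq'
  · have h := ((hP2 γ₂.1).symm.trans hceq').trans (hP2 γ₃.1)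
    rw [← hPeq'] at h
    exact h

/-- Claim 1.10: For interval Boolean algebras `B ζ = B(I ζ)`, `ζ < κ`,
and any family `{a α : α < (2^κ)^{++}}` in `∏_{ζ<κ} B ζ`, there are
`α₀ < α₁ < α₂ < α₃ < (2^κ)^{++}` with `(a α₀ △ a α₁) · (a α₂ △ a α₃) = 0`. -/

theorem stmt13 (κ : Cardinal.{u}) (hκ : Cardinal.aleph0 ≤ κ)
    (I : (Cardinal.ord κ).ToType → Type u) [∀ ζ, LinearOrder (I ζ)]
    (a : Ordinal.{u} → ∀ ζ, Set (I ζ))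
    (ha : ∀ α < (Order.succ (Order.succ ((2 : Cardinal.{u}) ^ κ))).ord,
      ∀ ζ, a α ζ ∈ IntervalAlgebra (I ζ)) :
    ∃ α₀ α₁ α₂ α₃ : Ordinal.{u},
      α₀ < α₁ ∧ α₁ < α₂ ∧ α₂ < α₃ ∧
      α₃ < (Order.succ (Order.succ ((2 : Cardinal.{u}) ^ κ))).ord ∧
      ∀ ζ, symmDiff (a α₀ ζ) (a α₁ ζ) ∩ symmDiff (a α₂ ζ) (a α₃ ζ) = ∅ := by
  classical
  set lam := (2 : Cardinal.{u}) ^ κ with hlam_def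
  set μ := (Order.succ (Order.succ lam)).ord with hμ_def
  have hrep : ∀ (p : {α : Ordinal.{u} // α < μ}) (ζ : (Cardinal.ord κ).ToType),
      ∃ F : ℕ → LPlus (I ζ) × LPlus (I ζ), ∀ x, x ∈ a p.1 ζ ↔ memF F x :=
    fun p ζ => exists_memF_rep (ha p.1 p.2 ζ)
  choose F0 hF0 using hrep
  set F : Ordinal.{u} → ∀ ζ, ℕ → LPlus (I ζ) × LPlus (I ζ) :=
    fun α => if h : α < μ then F0 ⟨α, h⟩ else fun _ _ => (⊥, ⊥) with hF_def
  have hF : ∀ α (h : α < μ) ζ (x : I ζ), x ∈ a α ζ ↔ memF (F α ζ) x := by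
    intro α h ζ x
    simp only [hF_def, dif_pos h]
    exact hF0 ⟨α, h⟩ ζ x
  set c : Ordinal.{u} → Ordinal.{u} →
      ULift.{u+1} (Set ((Cardinal.ord κ).ToType × ULift.{u} (ℕ × ℕ × Bool × Bool × Bool))) :=
    fun α β => ⟨colorOf (F α) (F β)⟩ with hc_def
  have hCcard : Cardinal.mk (ULift.{u+1} (Set ((Cardinal.ord κ).ToType ×
      ULift.{u} (ℕ × ℕ × Bool × Bool × Bool)))) ≤ Cardinal.lift.{u+1} lam := by
    rw [Cardinal.mk_uLift, Cardinal.lift_le, Cardinal.mk_set]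
    have hQ : Cardinal.mk ((Cardinal.ord κ).ToType × ULift.{u} (ℕ × ℕ × Bool × Bool × Bool)) = κ := by
      rw [Cardinal.mk_prod, Cardinal.mk_uLift, Cardinal.mk_toType, Cardinal.card_ord,
        Cardinal.lift_id, Cardinal.mk_eq_aleph0, Cardinal.lift_aleph0, Cardinal.lift_aleph0]
      exact Cardinal.mul_eq_left hκ hκ Cardinal.aleph0_ne_zero
    rw [hQ, hlam_def]
  obtain ⟨α₀, α₁, α₂, α₃, h01, h12, h23, h3μ, e1, e2, e3⟩ :=
    rect lam (hκ.trans (Cardinal.cantor κ).le) hCcard c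
  have E1 : colorOf (F α₀) (F α₂) = colorOf (F α₀) (F α₃) := congrArg ULift.down e1
  have E2 : colorOf (F α₁) (F α₂) = colorOf (F α₁) (F α₃) := congrArg ULift.down e2
  have E3 : colorOf (F α₀) (F α₂) = colorOf (F α₁) (F α₂) := congrArg ULift.down e3
  have h0μ : α₀ < μ := h01.trans (h12.trans (h23.trans h3μ))
  have h1μ : α₁ < μ := h12.trans (h23.trans h3μ)
  have h2μ : α₂ < μ := h23.trans h3μ
  refine ⟨α₀, α₁, α₂, α₃, h01, h12, h23, h3μ, ?_⟩
  intro ζ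
  have base : ∀ (s t : Bool) (m n : ℕ) (k l : Bool),
      (sel (F (bif s then α₁ else α₀) ζ m) k < sel (F (bif t then α₃ else α₂) ζ n) l ↔
        sel (F α₀ ζ m) k < sel (F α₂ ζ n) l) ∧
      (sel (F (bif t then α₃ else α₂) ζ n) l < sel (F (bif s then α₁ else α₀) ζ m) k ↔
        sel (F α₂ ζ n) l < sel (F α₀ ζ m) k) := by
    intro s t m n k l
    cases s <;> cases t
    · exact ⟨Iff.rfl, Iff.rfl⟩
    · obtain ⟨i1, i2⟩ := colorOf_eq_iff E1 ζ m n k l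
      exact ⟨i1.symm, i2.symm⟩
    · obtain ⟨i1, i2⟩ := colorOf_eq_iff E3 ζ m n k l
      exact ⟨i1.symm, i2.symm⟩
    · obtain ⟨i1, i2⟩ := colorOf_eq_iff E2 ζ m n k l
      obtain ⟨j1, j2⟩ := colorOf_eq_iff E3 ζ m n k l
      exact ⟨i1.symm.trans j1.symm, i2.symm.trans j2.symm⟩
  have sync : ∀ (s s' t t' : Bool) (m n : ℕ) (k l : Bool),
      (sel (F (bif s then α₁ else α₀) ζ m) k < sel (F (bif t then α₃ else α₂) ζ n) l ↔
        sel (F (bif s' then α₁ else α₀) ζ m) k < sel (F (bif t' then α₃ else α₂) ζ n) l) ∧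
      (sel (F (bif t then α₃ else α₂) ζ n) l < sel (F (bif s then α₁ else α₀) ζ m) k ↔
        sel (F (bif t' then α₃ else α₂) ζ n) l < sel (F (bif s' then α₁ else α₀) ζ m) k) :=
    fun s s' t t' m n k l =>
      ⟨((base s t m n k l).1).trans ((base s' t' m n k l).1).symm,
       ((base s t m n k l).2).trans ((base s' t' m n k l).2).symm⟩
  apply Set.eq_empty_iff_forall_notMem.mpr
  intro x hx
  obtain ⟨hx01, hx23⟩ := hx
  rw [Set.mem_symmDiff] at hx01 hx23
  have m0 := hF α₀ h0μ ζ x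
  have m1 := hF α₁ h1μ ζ x
  have m2 := hF α₂ h2μ ζ x
  have m3 := hF α₃ h3μ ζ x
  rcases hx01 with ⟨hi0, hi1⟩ | ⟨hi1, hi0⟩ <;> rcases hx23 with ⟨hi2, hi3⟩ | ⟨hi3, hi2⟩
  · exact core (fun s => F (bif s then α₁ else α₀) ζ) (fun t => F (bif t then α₃ else α₂) ζ)
      (fun s s' t t' => sync s s' t t') x
      (m0.mp hi0) (fun hm => hi1 (m1.mpr hm)) (m2.mp hi2) (fun hm => hi3 (m3.mpr hm))
  · exact core (fun s => F (bif s then α₁ else α₀) ζ) (fun t => F (bif !t then α₃ else α₂) ζ)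
      (fun s s' t t' => sync s s' (!t) (!t')) x
      (m0.mp hi0) (fun hm => hi1 (m1.mpr hm)) (m3.mp hi3) (fun hm => hi2 (m2.mpr hm))
  · exact core (fun s => F (bif !s then α₁ else α₀) ζ) (fun t => F (bif t then α₃ else α₂) ζ)
      (fun s s' t t' => sync (!s) (!s') t t') x
      (m1.mp hi1) (fun hm => hi0 (m0.mpr hm)) (m2.mp hi2) (fun hm => hi3 (m3.mpr hm))
  · exact core (fun s => F (bif !s then α₁ else α₀) ζ) (fun t => F (bif !t then α₃ else α₂) ζ)
      (fun s s' t t' => sync (!s) (!s') (!t) (!t')) x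
      (m1.mp hi1) (fun hm => hi0 (m0.mpr hm)) (m3.mp hi3) (fun hm => hi2 (m2.mpr hm))
end
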